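/- Let g : [0,1] → ℝ be bounded and piecewise constant and define h(r) = ∫_0^r g(z) dz − ∫_0^r (1/z)∫_0^z g(v) dv dz for r ∈ [0,1] (with the inner average interpreted as g(0) at z = 0). If g is constant on [0,1], then h ≡ 0 on [0,1]. Conversely, if h(r) = 0 for all r ∈ [0,1], then g is constant Lebesgue-almost everywhere on [0,1]. -/

import Mathlib

open MeasureTheory

/-- `g` is piecewise constant on `[0,1]`: there is a finite partition
`0 = p 0 ≤ p 1 ≤ ⋯ ≤ p n = 1` such that `g` is constant on each `[p i, p (i+1))`. -/
def PiecewiseConstantOn01 (g : ℝ → ℝ) : Prop :=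
  ∃ n : ℕ, ∃ p : Fin (n + 1) → ℝ, Monotone p ∧ p 0 = 0 ∧ p (Fin.last n) = 1 ∧
    ∀ i : Fin n, ∃ c : ℝ, ∀ x ∈ Set.Ico (p i.castSucc) (p i.succ), g x = c

lemma aux_cover {n : ℕ} (p : Fin (n + 1) → ℝ) (hm : Monotone p) (h0 : p 0 = 0)
    (h1 : p (Fin.last n) = 1) {x : ℝ} (hx0 : 0 ≤ x) (hx1 : x < 1) :
    ∃ i : Fin n, p i.castSucc ≤ x ∧ x < p i.succ := by
  classical
  set S : Finset (Fin (n + 1)) := Finset.univ.filter (fun i => p i ≤ x) with hS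
  have h0S : (0 : Fin (n + 1)) ∈ S := by simp [hS, h0, hx0]
  have hne : S.Nonempty := ⟨0, h0S⟩
  set i := S.max' hne with hi
  have hiS : i ∈ S := S.max'_mem hne
  have hip : p i ≤ x := by simpa [hS] using hiS
  have hilt : (i : ℕ) < n := by
    rcases lt_or_eq_of_le (Fin.le_last i) with hlt | heq
    · exact hlt
    · exfalso; rw [heq, h1] at hip; linarith
  refine ⟨⟨(i : ℕ), hilt⟩, ?_, ?_⟩
  · have : (⟨(i : ℕ), hilt⟩ : Fin n).castSucc = i := by ext; simp
    rw [this]; exact hip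
  · by_contra hcon
    push_neg at hcon
    have hmem : (⟨(i : ℕ), hilt⟩ : Fin n).succ ∈ S := by
      simp only [hS, Finset.mem_filter, Finset.mem_univ, true_and]
      exact hcon
    have := S.le_max' _ hmem
    rw [← hi] at this
    have : ((⟨(i : ℕ), hilt⟩ : Fin n).succ : Fin (n+1)) ≤ i := this
    simp [Fin.le_def] at this




lemma aux_integrable {n : ℕ} (p : Fin (n + 1) → ℝ) (hm : Monotone p) (h0 : p 0 = 0)
    (h1 : p (Fin.last n) = 1) (g : ℝ → ℝ) (c : Fin n → ℝ)
    (hc : ∀ i : Fin n, ∀ x ∈ Set.Ico (p i.castSucc) (p i.succ), g x = c i) :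
    IntegrableOn g (Set.Ioc (0:ℝ) 1) := by
  classical
  set s : ℝ → ℝ := fun x => ∑ i : Fin n, (Set.Ico (p i.castSucc) (p i.succ)).indicator
    (fun _ => c i) x with hs
  have hsint : IntegrableOn s (Set.Ioc (0:ℝ) 1) := by
    apply integrable_finset_sum
    intro i _
    rw [integrable_indicator_iff measurableSet_Ico]
    exact integrableOn_const (ne_of_lt (lt_of_le_of_lt (Measure.restrict_apply_le _ _)
      measure_Ico_lt_top))
  apply hsint.congr_fun_ae
  have h1null : (∀ᵐ x ∂(volume.restrict (Set.Ioc (0:ℝ) 1)), x ≠ 1) := by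
    refine ae_restrict_of_ae ?_
    simpa using (measure_eq_zero_iff_ae_notMem.mp (measure_singleton (1:ℝ)))
  have hmem := ae_restrict_mem (μ := volume) (measurableSet_Ioc (a := (0:ℝ)) (b := 1))
  filter_upwards [h1null, hmem] with x hx1 hxm
  obtain ⟨j, hj1, hj2⟩ := aux_cover p hm h0 h1 (le_of_lt hxm.1) (lt_of_le_of_ne hxm.2 hx1)
  show (∑ i : Fin n, (Set.Ico (p i.castSucc) (p i.succ)).indicator (fun _ => c i) x) = g x
  rw [Finset.sum_eq_single j]
  · have hxj : x ∈ Set.Ico (p j.castSucc) (p j.succ) := ⟨hj1, hj2⟩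
    rw [Set.indicator_of_mem hxj, hc j x hxj]
  · intro i _ hij
    apply Set.indicator_of_notMem
    intro hxi
    rcases lt_or_gt_of_ne hij with hlt | hgt
    · have : p i.succ ≤ p j.castSucc := hm (by simp [Fin.le_def]; omega)
      exact absurd (lt_of_le_of_lt this (lt_of_le_of_lt hj1 hxi.2)) (lt_irrefl _)
    · have : p j.succ ≤ p i.castSucc := hm (by simp [Fin.le_def]; omega)
      exact absurd (lt_of_le_of_lt this (lt_of_le_of_lt hxi.1 hj2)) (lt_irrefl _)
  · intro hj; exact absurd (Finset.mem_univ j) hj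

set_option maxHeartbeats 1000000 in
lemma aux_part2 {n : ℕ} (p : Fin (n + 1) → ℝ) (hm : Monotone p) (h0 : p 0 = 0)
    (h1 : p (Fin.last n) = 1) (g : ℝ → ℝ) (c : Fin n → ℝ)
    (hc : ∀ i : Fin n, ∀ x ∈ Set.Ico (p i.castSucc) (p i.succ), g x = c i)
    (M : ℝ) (hM : ∀ x ∈ Set.Icc (0 : ℝ) 1, |g x| ≤ M)
    (h : ℝ → ℝ)
    (hh : ∀ r, h r = (∫ z in (0 : ℝ)..r, g z)
        - ∫ z in (0 : ℝ)..r, (1 / z) * ∫ v in (0 : ℝ)..z, g v)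
    (hzero : ∀ r ∈ Set.Icc (0 : ℝ) 1, h r = 0) :
    ∃ K : ℝ, ∀ᵐ x ∂(volume.restrict (Set.Icc (0 : ℝ) 1)), g x = K := by
  classical
  have hgi : IntegrableOn g (Set.Ioc (0:ℝ) 1) := aux_integrable p hm h0 h1 g c hc
  set F : ℝ → ℝ := fun z => ∫ v in (0:ℝ)..z, g v with hF
  set φ : ℝ → ℝ := fun z => (1 / z) * ∫ v in (0:ℝ)..z, g v with hφ
  have hgint : ∀ a b : ℝ, 0 ≤ a → a ≤ 1 → 0 ≤ b → b ≤ 1 → IntervalIntegrable g volume a b := by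
    intro a b ha0 ha1 hb0 hb1
    rw [intervalIntegrable_iff]
    refine hgi.mono_set ?_
    rw [Set.uIoc]
    exact Set.Ioc_subset_Ioc (le_inf ha0 hb0) (sup_le ha1 hb1)
  have hgicc : IntegrableOn g (Set.Icc (0:ℝ) 1) := hgi.congr_set_ae Ioc_ae_eq_Icc.symm
  have hFcont : ContinuousOn F (Set.Icc (0:ℝ) 1) := by
    have h2 := intervalIntegral.continuousOn_primitive_interval (a := (0:ℝ)) (b := 1)
      (μ := volume) (f := g) (by rw [Set.uIcc_of_le zero_le_one]; exact hgicc)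
    rwa [Set.uIcc_of_le zero_le_one] at h2
  have hφcont : ContinuousOn φ (Set.Ioc (0:ℝ) 1) := by
    apply ContinuousOn.mul
    · exact ContinuousOn.div continuousOn_const continuousOn_id (fun x hx => ne_of_gt hx.1)
    · exact hFcont.mono Set.Ioc_subset_Icc_self
  have hφint : IntegrableOn φ (Set.Ioc (0:ℝ) 1) := by
    constructor
    · exact hφcont.aestronglyMeasurable measurableSet_Ioc
    · apply HasFiniteIntegral.restrict_of_bounded (C := M) measure_Ioc_lt_top
      refine (ae_restrict_mem measurableSet_Ioc).mono (fun z hz => ?_)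
      have hz0 : (0:ℝ) < z := hz.1
      have hFb : ‖F z‖ ≤ M * z := by
        have h3 := intervalIntegral.norm_integral_le_of_norm_le_const (C := M) (f := g)
          (a := (0:ℝ)) (b := z) (fun x hx => by
            rw [Set.uIoc_of_le (le_of_lt hz0)] at hx
            exact hM x ⟨le_of_lt hx.1, le_trans hx.2 hz.2⟩)
        rw [sub_zero, abs_of_pos hz0] at h3
        exact h3
      have : ‖φ z‖ = ‖F z‖ / z := by
        rw [hφ, Real.norm_eq_abs, Real.norm_eq_abs, abs_mul, abs_div, abs_one,
          abs_of_pos hz0, div_mul_eq_mul_div, one_mul]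
      rw [this, div_le_iff₀ hz0]
      exact hFb
  have hφii : ∀ r, 0 ≤ r → r ≤ 1 → IntervalIntegrable φ volume 0 r := by
    intro r h0r h1r
    rw [intervalIntegrable_iff_integrableOn_Ioc_of_le h0r]
    exact hφint.mono_set (Set.Ioc_subset_Ioc le_rfl h1r)
  have hkey : ∀ j : Fin n, ∀ r, p j.castSucc < r → r < p j.succ → F r = c j * r := by
    intro j r hr1 hr2
    have hpc0 : (0:ℝ) ≤ p j.castSucc := by rw [← h0]; exact hm (Fin.zero_le _)
    have hps1 : p j.succ ≤ 1 := by rw [← h1]; exact hm (Fin.le_last _)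
    have hr0 : 0 < r := lt_of_le_of_lt hpc0 hr1
    have hrlt1 : r < 1 := lt_of_lt_of_le hr2 hps1
    have hIoo : Set.Ioo (p j.castSucc) (p j.succ) ∈ nhds r := Ioo_mem_nhds hr1 hr2
    have hIoc : Set.Ioc (0:ℝ) 1 ∈ nhds r :=
      Filter.mem_of_superset (Ioo_mem_nhds hr0 hrlt1) Set.Ioo_subset_Ioc_self
    have hd1 : HasDerivAt (fun u => ∫ z in (0:ℝ)..u, g z) (g r) r := by
      apply intervalIntegral.integral_hasDerivAt_right
        (hgint 0 r le_rfl zero_le_one (le_of_lt hr0) (le_of_lt hrlt1))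
      · refine ⟨Set.Ioo (p j.castSucc) (p j.succ), hIoo, ?_⟩
        apply AEStronglyMeasurable.congr (f := fun _ => c j) aestronglyMeasurable_const
        refine (ae_restrict_iff' measurableSet_Ioo).2 (Filter.Eventually.of_forall fun x hx => ?_)
        exact (hc j x ⟨le_of_lt hx.1, hx.2⟩).symm
      · have heq : g =ᶠ[nhds r] fun _ => c j := by
          filter_upwards [hIoo] with x hx
          exact hc j x ⟨le_of_lt hx.1, hx.2⟩
        exact (continuousAt_congr heq).2 continuousAt_const
    have hd2 : HasDerivAt (fun u => ∫ z in (0:ℝ)..u, φ z) (φ r) r := by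
      apply intervalIntegral.integral_hasDerivAt_right (hφii r (le_of_lt hr0) (le_of_lt hrlt1))
      · exact ⟨Set.Ioc 0 1, hIoc, hφcont.aestronglyMeasurable measurableSet_Ioc⟩
      · exact hφcont.continuousAt hIoc
    have hdh : HasDerivAt h (g r - φ r) r := by
      have heq : h = fun u => (∫ z in (0:ℝ)..u, g z) - ∫ z in (0:ℝ)..u, φ z := funext hh
      rw [heq]
      exact hd1.sub hd2
    have hzero' : h =ᶠ[nhds r] fun _ => (0:ℝ) := by
      filter_upwards [Ioo_mem_nhds hr0 hrlt1] with x hx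
      exact hzero x ⟨le_of_lt hx.1, le_of_lt hx.2⟩
    have h0d : HasDerivAt (fun _ => (0:ℝ)) (g r - φ r) r :=
      (Filter.EventuallyEq.hasDerivAt_iff hzero').1 hdh
    have hdiff : g r - φ r = 0 := h0d.unique (hasDerivAt_const r 0)
    have hgr : g r = c j := hc j r ⟨le_of_lt hr1, hr2⟩
    have hφr : φ r = (1/r) * F r := rfl
    have : c j = (1/r) * F r := by rw [← hgr, ← hφr]; linarith
    field_simp at this
    linarith
  set K : ℝ := F 1 with hK
  have hadj : ∀ z b : ℝ, 0 ≤ z → z ≤ b → b ≤ 1 → F b = F z + ∫ t in z..b, g t := by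
    intro z b hz0 hzb hb1
    have h4 := intervalIntegral.integral_add_adjacent_intervals
      (hgint 0 z le_rfl zero_le_one hz0 (le_trans hzb hb1))
      (hgint z b hz0 (le_trans hzb hb1) (le_trans hz0 hzb) hb1)
    simp only [hF]
    linarith [h4]
  have hpiece : ∀ j : Fin n, ∀ z b, p j.castSucc ≤ z → z ≤ b → b ≤ p j.succ →
      (∫ t in z..b, g t) = c j * (b - z) := by
    intro j z b hz hzb hb
    rw [intervalIntegral.integral_congr_ae (g := fun _ => c j) ?_]
    · rw [intervalIntegral.integral_const, smul_eq_mul]; ring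
    · have hb' : ∀ᵐ x ∂(volume : Measure ℝ), x ≠ p j.succ := by
        simpa using measure_eq_zero_iff_ae_notMem.mp (measure_singleton (p j.succ))
      filter_upwards [hb'] with x hx hxm
      rw [Set.uIoc_of_le hzb] at hxm
      exact hc j x ⟨le_trans hz (le_of_lt hxm.1), lt_of_le_of_ne (le_trans hxm.2 hb) hx⟩
  have hQ : ∀ m : ℕ, m ≤ n → ∀ z, p ⟨n - m, by omega⟩ ≤ z → z ≤ 1 → F z = K * z := by
    intro m
    induction m with
    | zero =>
      intro _ z hz1 hz2
      have hpn : p ⟨n - 0, by omega⟩ = 1 := by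
        have he : (⟨n - 0, by omega⟩ : Fin (n+1)) = Fin.last n := by ext; simp
        rw [he, h1]
      rw [hpn] at hz1
      have hz : z = 1 := le_antisymm hz2 hz1
      rw [hz, hK, mul_one]
    | succ m ih =>
      intro hm' z hz1 hz2
      set j : Fin n := ⟨n - (m+1), by omega⟩ with hj
      have hjc : j.castSucc = (⟨n - (m+1), by omega⟩ : Fin (n+1)) := by ext; simp [hj]
      have hjs : j.succ = (⟨n - m, by omega⟩ : Fin (n+1)) := by ext; simp [hj]; omega
      by_cases hcase : p ⟨n - m, by omega⟩ ≤ z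
      · exact ih (by omega) z hcase hz2
      · push_neg at hcase
        have ha : p j.castSucc ≤ z := by rw [hjc]; exact hz1
        have hb : z < p j.succ := by rw [hjs]; exact hcase
        have hpc0 : (0:ℝ) ≤ p j.castSucc := by rw [← h0]; exact hm (Fin.zero_le _)
        have hps1 : p j.succ ≤ 1 := by rw [← h1]; exact hm (Fin.le_last _)
        have hab : p j.castSucc < p j.succ := lt_of_le_of_lt ha hb
        obtain ⟨w, hw1, hw2⟩ : ∃ w, p j.castSucc < w ∧ w < p j.succ :=
          ⟨(p j.castSucc + p j.succ)/2, by linarith, by linarith⟩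
        have hw0 : 0 ≤ w := le_trans hpc0 (le_of_lt hw1)
        have hFw : F w = c j * w := hkey j w hw1 hw2
        have hFb : F (p j.succ) = c j * p j.succ := by
          rw [hadj w (p j.succ) hw0 (le_of_lt hw2) hps1, hFw,
            hpiece j w (p j.succ) (le_of_lt hw1) (le_of_lt hw2) le_rfl]
          ring
        have hKb : F (p j.succ) = K * p j.succ := by
          apply ih (by omega) (p j.succ) _ hps1
          rw [hjs]
        have hb0 : 0 < p j.succ := lt_of_le_of_lt (le_trans hpc0 ha) hb
        have hcK : c j = K := mul_right_cancel₀ (ne_of_gt hb0) (hFb.symm.trans hKb)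
        have hFz : F (p j.succ) = F z + c j * (p j.succ - z) := by
          rw [hadj z (p j.succ) (le_trans hpc0 ha) (le_of_lt hb) hps1,
            hpiece j z (p j.succ) ha (le_of_lt hb) le_rfl]
        rw [hKb, hcK] at hFz
        linarith
  have hFall : ∀ z, 0 ≤ z → z ≤ 1 → F z = K * z := by
    intro z hz1 hz2
    have h00 : p ⟨n - n, by omega⟩ = 0 := by
      have he : (⟨n - n, by omega⟩ : Fin (n+1)) = (0 : Fin (n+1)) := by ext; simp
      rw [he, h0]
    exact hQ n le_rfl z (by rw [h00]; exact hz1) hz2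
  refine ⟨K, ?_⟩
  have hpnull : ∀ᵐ x ∂(volume : Measure ℝ), x ∉ (Set.range p ∪ {1} : Set ℝ) :=
    measure_eq_zero_iff_ae_notMem.mp
      (((Set.finite_range p).union (Set.finite_singleton 1)).measure_zero volume)
  have hmem := ae_restrict_mem (μ := volume) (measurableSet_Icc (a := (0:ℝ)) (b := 1))
  filter_upwards [ae_restrict_of_ae hpnull, hmem] with x hxn hxm
  rw [Set.mem_union] at hxn
  push_neg at hxn
  have hx1 : x ≠ 1 := by simpa using hxn.2
  obtain ⟨j, hj1, hj2⟩ := aux_cover p hm h0 h1 hxm.1 (lt_of_le_of_ne hxm.2 hx1)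
  have hxne : x ≠ p j.castSucc := fun hx => hxn.1 ⟨j.castSucc, hx.symm⟩
  have hj1' : p j.castSucc < x := lt_of_le_of_ne hj1 (Ne.symm hxne)
  have hx0 : 0 < x := lt_of_le_of_lt (by rw [← h0]; exact hm (Fin.zero_le _)) hj1'
  have hcjK : c j = K :=
    mul_right_cancel₀ (ne_of_gt hx0) ((hkey j x hj1' hj2).symm.trans (hFall x hxm.1 hxm.2))
  rw [hc j x ⟨hj1, hj2⟩, hcjK]

/-- The drift `h(r) = ∫₀ʳ g − ∫₀ʳ (1/z)∫₀ᶻ g` vanishes identically on `[0,1]`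
iff the bounded piecewise constant break function `g` is (a.e.) constant:
if `g` is constant on `[0,1]` then `h ≡ 0`, and if `h ≡ 0` on `[0,1]` then `g` is
constant Lebesgue-a.e. on `[0,1]`. -/
theorem stmt16 (g : ℝ → ℝ)
    (hbd : ∃ M : ℝ, ∀ x ∈ Set.Icc (0 : ℝ) 1, |g x| ≤ M)
    (hpc : PiecewiseConstantOn01 g)
    (h : ℝ → ℝ)
    (hh : ∀ r, h r = (∫ z in (0 : ℝ)..r, g z)
        - ∫ z in (0 : ℝ)..r, (1 / z) * ∫ v in (0 : ℝ)..z, g v) :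
    ((∀ x ∈ Set.Icc (0 : ℝ) 1, g x = g 0) → ∀ r ∈ Set.Icc (0 : ℝ) 1, h r = 0) ∧
    ((∀ r ∈ Set.Icc (0 : ℝ) 1, h r = 0) →
      ∃ c : ℝ, ∀ᵐ x ∂(volume.restrict (Set.Icc (0 : ℝ) 1)), g x = c) := by
  constructor
  · intro hconst r hr
    obtain ⟨hr0, hr1⟩ := hr
    have key1 : ∀ z ∈ Set.Icc (0:ℝ) 1, (∫ v in (0:ℝ)..z, g v) = g 0 * z := by
      intro z hz
      rw [intervalIntegral.integral_congr (g := fun _ => g 0) ?_]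
      · rw [intervalIntegral.integral_const, smul_eq_mul]; ring
      · intro x hx
        rw [Set.uIcc_of_le hz.1] at hx
        exact hconst x ⟨hx.1, le_trans hx.2 hz.2⟩
    have key2 : (∫ z in (0:ℝ)..r, (1 / z) * ∫ v in (0:ℝ)..z, g v) = g 0 * r := by
      rw [intervalIntegral.integral_congr_ae (g := fun _ => g 0) ?_]
      · rw [intervalIntegral.integral_const, smul_eq_mul]; ring
      · refine Filter.Eventually.of_forall (fun z hz => ?_)
        rw [Set.uIoc_of_le hr0] at hz
        rw [key1 z ⟨le_of_lt hz.1, le_trans hz.2 hr1⟩]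
        field_simp [ne_of_gt hz.1]
    rw [hh, key1 r ⟨hr0, hr1⟩, key2, sub_self]
  · intro hzero
    obtain ⟨M, hM⟩ := hbd
    obtain ⟨n, p, hm, h0, h1, hpc'⟩ := hpc
    choose c hc using hpc'
    exact aux_part2 p hm h0 h1 g c hc M hM h hh hzero
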